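/- For every vector of agent positions x ∈ [0,1]^n, every vector of facility locations y ∈ [0,1]^m, and every capacity vector k ∈ ℕ^m, the First-Come-First-Served game associated with (x, y, k) admits at least one pure Nash Equilibrium. -/

import Mathlib

open scoped Classical

noncomputable section

/-- Agent `i'` precedes agent `i` at a facility located at `y`: it is strictly closer,
or equally close with higher priority (smaller index). -/
def Prec {n : ℕ} (x : Fin n → ℝ) (y : ℝ) (i' i : Fin n) : Prop :=
  |x i' - y| < |x i - y| ∨ (|x i' - y| = |x i - y| ∧ i' < i)

/-- Utility of agent `i` in the FCFS game: positions `x`, facility locations `y`,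
capacities `k`, strategy profile `s`.  Agent `i` is served by facility `s i` iff fewer
than `k (s i)` agents selecting `s i` precede it. -/
def utility {n m : ℕ} (x : Fin n → ℝ) (y : Fin m → ℝ) (k : Fin m → ℕ)
    (s : Fin n → Fin m) (i : Fin n) : ℝ :=
  if {i' | s i' = s i ∧ Prec x (y (s i)) i' i}.ncard < k (s i)
  then 1 - |x i - y (s i)| else 0

/-- Pure Nash equilibrium of the FCFS game. -/
def isNE {n m : ℕ} (x : Fin n → ℝ) (y : Fin m → ℝ) (k : Fin m → ℕ)
    (s : Fin n → Fin m) : Prop :=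
  ∀ (i : Fin n) (j : Fin m),
    utility x y k (Function.update s i j) i ≤ utility x y k s i

/-- Social welfare of a strategy profile. -/
def SW {n m : ℕ} (x : Fin n → ℝ) (y : Fin m → ℝ) (k : Fin m → ℕ)
    (s : Fin n → Fin m) : ℝ :=
  ∑ i, utility x y k s i

def InUnit {N : ℕ} (x : Fin N → ℝ) : Prop := ∀ i, x i ∈ Set.Icc (0 : ℝ) 1

/-- The `i`-th (0-based) smallest entry of `x` (junk value `0` out of range). -/
def sortedVal {n : ℕ} (x : Fin n → ℝ) (i : ℕ) : ℝ :=
  if h : i < n then x (Tuple.sort x ⟨i, h⟩) else 0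

/-- The 1-based index `⌊(n-1)v⌋ + 1` used by the percentile mechanism. -/
def percIdx (n : ℕ) (v : ℝ) : ℕ := ⌊((n : ℝ) - 1) * v⌋.toNat + 1

/-- The location selected by the percentile `v`: the `(⌊(n-1)v⌋+1)`-th sorted report. -/
def percLoc {n : ℕ} (x : Fin n → ℝ) (v : ℝ) : ℝ :=
  sortedVal x (⌊((n : ℝ) - 1) * v⌋.toNat)

/-- The percentile mechanism induced by the percentile vector `v`. -/
def PM {n m : ℕ} (v : Fin m → ℝ) : (Fin n → ℝ) → Fin m → ℝ :=
  fun x j => percLoc x (v j)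

/-- A mechanism is Equilibrium Stable if on every instance all pure Nash equilibria of the
induced FCFS game yield the same Social Welfare. -/
def EquilibriumStable {n m : ℕ} (k : Fin m → ℕ)
    (M : (Fin n → ℝ) → Fin m → ℝ) : Prop :=
  ∀ x, InUnit x → ∀ s s', isNE x (M x) k s → isNE x (M x) k s' →
    SW x (M x) k s = SW x (M x) k s'

/-- A mechanism is absolutely truthful if no agent can increase its best-response utility
by misreporting, whatever the fixed strategies of the others. -/
def AbsolutelyTruthful {n m : ℕ} (k : Fin m → ℕ)
    (M : (Fin n → ℝ) → Fin m → ℝ) : Prop :=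
  ∀ x, InUnit x → ∀ (i : Fin n) (x' : ℝ), x' ∈ Set.Icc (0 : ℝ) 1 →
    ∀ s : Fin n → Fin m,
      (⨆ si : Fin m, utility x (M (Function.update x i x')) k (Function.update s i si) i) ≤
      (⨆ si : Fin m, utility x (M x) k (Function.update s i si) i)

/-- Optimal Social Welfare over facility locations in `[0,1]^m` and Nash equilibria. -/
def SWopt {n m : ℕ} (k : Fin m → ℕ) (x : Fin n → ℝ) : ℝ :=
  sSup {w | ∃ y : Fin m → ℝ, InUnit y ∧ ∃ s, isNE x y k s ∧ w = SW x y k s}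

/-- Social Welfare achieved by a mechanism (common value over all NE for ES mechanisms). -/
def SWmech {n m : ℕ} (k : Fin m → ℕ) (M : (Fin n → ℝ) → Fin m → ℝ)
    (x : Fin n → ℝ) : ℝ :=
  sSup {w | ∃ s, isNE x (M x) k s ∧ w = SW x (M x) k s}

/-- Approximation ratio of a mechanism. -/
def approxRatio {n m : ℕ} (k : Fin m → ℕ) (M : (Fin n → ℝ) → Fin m → ℝ) : ℝ :=
  sSup {r | ∃ x : Fin n → ℝ, InUnit x ∧ r = SWopt k x / SWmech k M x}

end


namespace FCFSExist

open Finset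

variable {n m : ℕ}

/-- Lexicographic key of an agent-facility pair: distance, then agent, then facility. -/
noncomputable def fkey (x : Fin n → ℝ) (y : Fin m → ℝ) (p : Fin n × Fin m) :
    ℝ ×ₗ (Fin n ×ₗ Fin m) := toLex (|x p.1 - y p.2|, toLex (p.1, p.2))

lemma fkey_inj (x : Fin n → ℝ) (y : Fin m → ℝ) {p q : Fin n × Fin m}
    (h : fkey x y p = fkey x y q) : p = q := by
  simp only [fkey, toLex_inj, Prod.mk.injEq] at h
  exact Prod.ext h.2.1 h.2.2

lemma prec_of_fkey_lt {x : Fin n → ℝ} {y : Fin m → ℝ} {p q : Fin n × Fin m}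
    (h2 : p.2 = q.2) (h : fkey x y p < fkey x y q) : Prec x (y q.2) p.1 q.1 := by
  rw [fkey, fkey, Prod.Lex.lt_iff] at h
  rcases h with h | ⟨he, hlt⟩
  · left; rwa [h2] at h
  · rw [Prod.Lex.lt_iff] at hlt
    rcases hlt with h1 | ⟨-, h2'⟩
    · right; exact ⟨by rwa [h2] at he, h1⟩
    · exact absurd h2' (by rw [h2]; exact lt_irrefl _)

lemma prec_irrefl (x : Fin n → ℝ) (z : ℝ) (i : Fin n) : ¬ Prec x z i i := by
  simp [Prec]

lemma prec_asymm {x : Fin n → ℝ} {z : ℝ} {i i' : Fin n}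
    (h : Prec x z i' i) (h' : Prec x z i i') : False := by
  rcases h with h | ⟨e, l⟩ <;> rcases h' with h' | ⟨e', l'⟩
  · linarith
  · linarith
  · linarith
  · exact absurd l' (not_lt.mpr (le_of_lt l))

/-- A pair is available: its agent unmatched and its facility not full. -/
def avail (k : Fin m → ℕ) (F : Finset (Fin n × Fin m)) (p : Fin n × Fin m) : Prop :=
  (∀ q ∈ F, q.1 ≠ p.1) ∧ (F.filter (fun q => q.2 = p.2)).card < k p.2

noncomputable def availSet (k : Fin m → ℕ) (F : Finset (Fin n × Fin m)) :
    Finset (Fin n × Fin m) :=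
  Finset.univ.filter (avail k F)

lemma mem_availSet {k : Fin m → ℕ} {F : Finset (Fin n × Fin m)} {p : Fin n × Fin m} :
    p ∈ availSet k F ↔ avail k F p := by
  simp [availSet]

/-- One greedy step: add the available pair with the least key, if any. -/
noncomputable def step (x : Fin n → ℝ) (y : Fin m → ℝ) (k : Fin m → ℕ)
    (F : Finset (Fin n × Fin m)) : Finset (Fin n × Fin m) :=
  if h : (availSet k F).Nonempty then
    insert (Classical.choose (Finset.exists_min_image (availSet k F) (fkey x y) h)) F
  else F

lemma step_spec (x : Fin n → ℝ) (y : Fin m → ℝ) (k : Fin m → ℕ)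
    (F : Finset (Fin n × Fin m)) (hne : (availSet k F).Nonempty) :
    ∃ r, avail k F r ∧ (∀ q, avail k F q → fkey x y r ≤ fkey x y q) ∧
      step x y k F = insert r F := by
  obtain ⟨hmem, hmin⟩ :=
    Classical.choose_spec (Finset.exists_min_image (availSet k F) (fkey x y) hne)
  refine ⟨_, mem_availSet.mp hmem, ?_, ?_⟩
  · intro q hq; exact hmin q (mem_availSet.mpr hq)
  · rw [step, dif_pos hne]

/-- The invariants of the greedy process. -/
def Inv (x : Fin n → ℝ) (y : Fin m → ℝ) (k : Fin m → ℕ)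
    (F : Finset (Fin n × Fin m)) : Prop :=
  (∀ p ∈ F, ∀ q ∈ F, p.1 = q.1 → p = q) ∧
  (∀ j, (F.filter (fun q => q.2 = j)).card ≤ k j) ∧
  (∀ p : Fin n × Fin m, (∀ q ∈ F, q.1 ≠ p.1) →
      ∀ q ∈ F, q.2 = p.2 → fkey x y q < fkey x y p) ∧
  (∀ p q0 : Fin n × Fin m, q0 ∈ F → q0.1 = p.1 → fkey x y p < fkey x y q0 →
      k p.2 ≤ (F.filter (fun q => q.2 = p.2)).card ∧
      ∀ q ∈ F, q.2 = p.2 → fkey x y q < fkey x y p)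

lemma inv_empty (x : Fin n → ℝ) (y : Fin m → ℝ) (k : Fin m → ℕ) :
    Inv x y k (∅ : Finset (Fin n × Fin m)) := by
  refine ⟨?_, ?_, ?_, ?_⟩ <;> simp

lemma inv_step (x : Fin n → ℝ) (y : Fin m → ℝ) (k : Fin m → ℕ)
    (F : Finset (Fin n × Fin m)) (h : Inv x y k F) : Inv x y k (step x y k F) := by
  by_cases hne : (availSet k F).Nonempty
  swap
  · rw [step, dif_neg hne]; exact h
  obtain ⟨r, hrav, hrmin, hstep⟩ := step_spec x y k F hne
  obtain ⟨ha, hb, hc2, hc3⟩ := h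
  have hrF : r ∉ F := fun hr => hrav.1 r hr rfl
  rw [hstep]
  have hrmin' : ∀ q, avail k F q → q ≠ r → fkey x y r < fkey x y q := by
    intro q hq hne'
    exact lt_of_le_of_ne (hrmin q hq) (fun he => hne' ((fkey_inj x y he).symm))
  refine ⟨?_, ?_, ?_, ?_⟩
  · intro p hp q hq hpq
    rcases Finset.mem_insert.mp hp with hpr | hp'
    · rcases Finset.mem_insert.mp hq with hqr | hq'
      · rw [hpr, hqr]
      · exact absurd (show q.1 = r.1 by rw [← hpr]; exact hpq.symm) (hrav.1 q hq')
    · rcases Finset.mem_insert.mp hq with hqr | hq'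
      · exact absurd (show p.1 = r.1 by rw [← hqr]; exact hpq) (hrav.1 p hp')
      · exact ha p hp' q hq' hpq
  · intro j
    rw [Finset.filter_insert]
    split_ifs with hrj
    · rw [Finset.card_insert_of_notMem (fun hmem => hrF (Finset.mem_of_mem_filter r hmem))]
      have h' := hrav.2
      simp only [hrj] at h'
      omega
    · exact hb j
  · intro p hp q hq hq2
    have hpF : ∀ q ∈ F, q.1 ≠ p.1 := fun q hq => hp q (Finset.mem_insert_of_mem hq)
    rcases Finset.mem_insert.mp hq with rfl | hqF
    · have hne2 : p ≠ q := fun he => hp q (Finset.mem_insert_self q F) (by rw [he])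
      have hpav : avail k F p := by
        refine ⟨hpF, ?_⟩
        have h' := hrav.2
        simp only [hq2] at h'
        exact h'
      exact hrmin' p hpav hne2
    · exact hc2 p hpF q hqF hq2
  · intro p q0 hq0 hq01 hlt
    rcases Finset.mem_insert.mp hq0 with rfl | hq0F
    · have hpr : p ≠ q0 := fun he => absurd hlt (by rw [he]; exact lt_irrefl _)
      have hp2 : q0.2 ≠ p.2 := fun he => hpr (Prod.ext hq01.symm he.symm)
      have hunm : ∀ q ∈ F, q.1 ≠ p.1 := by
        intro q hq; rw [← hq01]; exact hrav.1 q hq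
      have hfill : ∀ q ∈ F, q.2 = p.2 → fkey x y q < fkey x y p := hc2 p hunm
      have hfull : k p.2 ≤ (F.filter (fun q => q.2 = p.2)).card := by
        by_contra hlt2
        push_neg at hlt2
        exact absurd (hrmin p ⟨hunm, hlt2⟩) (not_le.mpr hlt)
      constructor
      · exact le_trans hfull
          (Finset.card_le_card (Finset.filter_subset_filter _ (Finset.subset_insert q0 F)))
      · intro q hq hq2
        rcases Finset.mem_insert.mp hq with rfl | hqF
        · exact absurd hq2 hp2
        · exact hfill q hqF hq2
    · obtain ⟨hfull, hfill⟩ := hc3 p q0 hq0F hq01 hlt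
      have hp2 : r.2 ≠ p.2 := by
        intro he
        have h' := hrav.2
        simp only [he] at h'
        omega
      constructor
      · exact le_trans hfull
          (Finset.card_le_card (Finset.filter_subset_filter _ (Finset.subset_insert r F)))
      · intro q hq hq2
        rcases Finset.mem_insert.mp hq with rfl | hqF
        · exact absurd hq2 hp2
        · exact hfill q hqF hq2

/-- The final greedy matching. -/
noncomputable def Fstar (x : Fin n → ℝ) (y : Fin m → ℝ) (k : Fin m → ℕ) :
    Finset (Fin n × Fin m) := (step x y k)^[n*m+1] ∅

lemma inv_Fstar (x : Fin n → ℝ) (y : Fin m → ℝ) (k : Fin m → ℕ) :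
    Inv x y k (Fstar x y k) := by
  have : ∀ t, Inv x y k ((step x y k)^[t] ∅) := by
    intro t
    induction t with
    | zero => exact inv_empty x y k
    | succ t ih => rw [Function.iterate_succ_apply']; exact inv_step x y k _ ih
  exact this _

lemma card_progress (x : Fin n → ℝ) (y : Fin m → ℝ) (k : Fin m → ℕ) :
    ∀ t, availSet k ((step x y k)^[t] (∅ : Finset (Fin n × Fin m))) = ∅ ∨
      t ≤ ((step x y k)^[t] (∅ : Finset (Fin n × Fin m))).card := by
  intro t
  induction t with
  | zero => exact Or.inr (Nat.zero_le _)
  | succ t ih =>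
    rw [Function.iterate_succ_apply']
    by_cases hne : (availSet k ((step x y k)^[t] ∅)).Nonempty
    · obtain ⟨r, hrav, hrmin, hstep⟩ := step_spec x y k _ hne
      rcases ih with h0 | h0
      · rw [h0] at hne; exact absurd hne (by simp)
      · right
        rw [hstep, Finset.card_insert_of_notMem (fun hr => hrav.1 r hr rfl)]
        omega
    · rw [step, dif_neg hne]
      exact Or.inl (Finset.not_nonempty_iff_eq_empty.mp hne)

lemma not_avail_Fstar (x : Fin n → ℝ) (y : Fin m → ℝ) (k : Fin m → ℕ)
    (p : Fin n × Fin m) : ¬ avail k (Fstar x y k) p := by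
  intro hp
  have hmem : p ∈ availSet k (Fstar x y k) := mem_availSet.mpr hp
  rcases card_progress x y k (n*m+1) with h | h
  · rw [Fstar] at hmem; rw [h] at hmem; simp at hmem
  · have hcard : ((step x y k)^[n*m+1] (∅ : Finset (Fin n × Fin m))).card ≤ n * m := by
      calc ((step x y k)^[n*m+1] (∅ : Finset (Fin n × Fin m))).card
          ≤ (Finset.univ : Finset (Fin n × Fin m)).card := Finset.card_le_univ _
        _ = n * m := by simp
    omega

/-- The strategy profile induced by a matching (unmatched agents parked at `j0`). -/
noncomputable def strat (j0 : Fin m) (F : Finset (Fin n × Fin m)) : Fin n → Fin m :=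
  fun i => if h : ∃ j, (i, j) ∈ F then h.choose else j0

lemma strat_mem (j0 : Fin m) (F : Finset (Fin n × Fin m)) (i : Fin n)
    (h : ∃ j, (i, j) ∈ F) : (i, strat j0 F i) ∈ F := by
  rw [strat, dif_pos h]; exact h.choose_spec

lemma strat_eq (j0 : Fin m) {F : Finset (Fin n × Fin m)}
    (hmatch : ∀ p ∈ F, ∀ q ∈ F, p.1 = q.1 → p = q)
    {i : Fin n} {j : Fin m} (hij : (i, j) ∈ F) : strat j0 F i = j := by
  have h : ∃ j', (i, j') ∈ F := ⟨j, hij⟩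
  have h2 := strat_mem j0 F i h
  have h3 := hmatch _ h2 _ hij rfl
  exact (Prod.ext_iff.mp h3).2

end FCFSExist

/-- For every vector of agent positions `x ∈ [0,1]^n`, every vector of
facility locations `y ∈ [0,1]^m`, and every capacity vector `k`, the FCFS game associated
with `(x, y, k)` admits at least one pure Nash equilibrium. -/

theorem fcfs_game_has_pure_NE (n m : ℕ) (hm : 0 < m)
    (x : Fin n → ℝ) (hx : InUnit x) (y : Fin m → ℝ) (hy : InUnit y)
    (k : Fin m → ℕ) (hk : ∀ j, 0 < k j) :
    ∃ s : Fin n → Fin m, isNE x y k s := by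
  classical
  set F := FCFSExist.Fstar x y k with hF
  have hinv := FCFSExist.inv_Fstar x y k
  rw [← hF] at hinv
  obtain ⟨ha, hb, hc2, hc3⟩ := hinv
  have hnotav : ∀ p : Fin n × Fin m, ¬ FCFSExist.avail k F p := by
    intro p
    rw [hF]; exact FCFSExist.not_avail_Fstar x y k p
  set j0 : Fin m := ⟨0, hm⟩ with hj0
  set s : Fin n → Fin m := FCFSExist.strat j0 F with hs
  have habs : ∀ (i : Fin n) (j : Fin m), |x i - y j| ≤ 1 := by
    intro i j
    obtain ⟨h1, h2⟩ := hx i; obtain ⟨h3, h4⟩ := hy j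
    rw [abs_le]; constructor <;> linarith
  have hT : ∀ j : Fin m,
      {i' | (i', j) ∈ F}.ncard = (F.filter (fun q => q.2 = j)).card := by
    intro j
    have he : {i' | (i', j) ∈ F} = ↑((F.filter (fun q => q.2 = j)).image Prod.fst) := by
      ext i'
      simp only [Set.mem_setOf_eq, Finset.coe_image, Set.mem_image, Finset.mem_coe,
        Finset.mem_filter]
      constructor
      · intro h; exact ⟨(i', j), ⟨h, rfl⟩, rfl⟩
      · rintro ⟨p, ⟨hp, hp2⟩, hp1⟩
        have hpe : p = (i', j) := Prod.ext hp1 hp2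
        exact hpe ▸ hp
    rw [he, Set.ncard_coe_finset, Finset.card_image_of_injOn]
    intro p hp q hq hpq
    simp only [Finset.coe_filter, Set.mem_setOf_eq] at hp hq
    exact ha p hp.1 q hq.1 hpq
  have hge : ∀ (σ : Fin n → Fin m) (i : Fin n) (j : Fin m),
      (∀ q ∈ F, q.2 = j → FCFSExist.fkey x y q < FCFSExist.fkey x y (i, j)) →
      k j ≤ (F.filter (fun q => q.2 = j)).card →
      (∀ i', (i', j) ∈ F → σ i' = j) →
      ¬ ({i' | σ i' = j ∧ Prec x (y j) i' i}.ncard < k j) := by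
    intro σ i j hprec hcard hσ
    have hsub : {i' | (i', j) ∈ F} ⊆ {i' | σ i' = j ∧ Prec x (y j) i' i} := by
      intro i' hi'
      exact ⟨hσ i' hi', FCFSExist.prec_of_fkey_lt (p := (i', j)) (q := (i, j)) rfl (hprec (i', j) hi' rfl)⟩
    have hle := Set.ncard_le_ncard hsub (Set.toFinite _)
    rw [hT j] at hle
    omega
  refine ⟨s, ?_⟩
  intro i j
  by_cases hi : ∃ j', (i, j') ∈ F
  · -- matched agent
    have hmem : (i, s i) ∈ F := by rw [hs]; exact FCFSExist.strat_mem j0 F i hi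
    have hserve : {i' | s i' = s i ∧ Prec x (y (s i)) i' i}.ncard < k (s i) := by
      have hsub : {i' | s i' = s i ∧ Prec x (y (s i)) i' i} ⊆
          {i' | (i', s i) ∈ F} \ {i} := by
        rintro i' ⟨hsi', hprec⟩
        have hne : i' ≠ i := by
          rintro rfl; exact FCFSExist.prec_irrefl x _ i' hprec
        refine ⟨?_, hne⟩
        by_cases hi' : ∃ j'', (i', j'') ∈ F
        · have h2 : (i', FCFSExist.strat j0 F i') ∈ F := FCFSExist.strat_mem j0 F i' hi'
          rw [← hs] at h2
          rw [hsi'] at h2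
          exact h2
        · exfalso
          have hunm : ∀ q ∈ F, q.1 ≠ i' := by
            intro q hq he
            exact hi' ⟨q.2, by rw [← he]; exact hq⟩
          have hkey := hc2 (i', s i) hunm (i, s i) hmem rfl
          exact FCFSExist.prec_asymm hprec (FCFSExist.prec_of_fkey_lt (p := (i, s i)) (q := (i', s i)) rfl hkey)
      have h1 : ({i' | (i', s i) ∈ F} \ {i}).ncard = {i' | (i', s i) ∈ F}.ncard - 1 :=
        Set.ncard_diff_singleton_of_mem hmem
      have h2 := Set.ncard_le_ncard hsub (Set.toFinite _)
      have h3 : {i' | (i', s i) ∈ F}.ncard ≤ k (s i) := by rw [hT (s i)]; exact hb (s i)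
      have h4 : 0 < k (s i) := hk (s i)
      omega
    have hutil : utility x y k s i = 1 - |x i - y (s i)| := by
      unfold utility
      rw [if_pos hserve]
    set s' := Function.update s i j with hs'
    have hs'i : s' i = j := Function.update_self i j s
    by_cases hd : |x i - y (s i)| ≤ |x i - y j|
    · have hle : utility x y k s' i ≤ 1 - |x i - y (s i)| := by
        unfold utility
        simp only [hs'i]
        split_ifs with hcond
        · linarith
        · linarith [habs i (s i)]
      rw [hutil]; exact hle
    · push_neg at hd
      have hjne : (i, j) ∉ F := by
        intro hmem2
        have he := ha _ hmem2 _ hmem rfl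
        have hj : j = s i := (Prod.ext_iff.mp he).2
        rw [hj] at hd; exact lt_irrefl _ hd
      have hklt : FCFSExist.fkey x y (i, j) < FCFSExist.fkey x y (i, s i) := by
        rw [FCFSExist.fkey, FCFSExist.fkey, Prod.Lex.lt_iff]
        exact Or.inl hd
      obtain ⟨hfull, hfill⟩ := hc3 (i, j) (i, s i) hmem rfl hklt
      have hσ : ∀ i', (i', j) ∈ F → s' i' = j := by
        intro i' hi'
        have hne : i' ≠ i := fun he => hjne (he ▸ hi')
        rw [hs', Function.update_of_ne hne, hs]
        exact FCFSExist.strat_eq j0 ha hi'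
      have hcnt := hge s' i j hfill hfull hσ
      have hz : utility x y k s' i = 0 := by
        unfold utility
        simp only [hs'i]
        rw [if_neg hcnt]
      rw [hz, hutil]
      linarith [habs i (s i)]
  · -- unmatched agent
    have hunm : ∀ q ∈ F, q.1 ≠ i := by
      intro q hq he; exact hi ⟨q.2, by rw [← he]; exact hq⟩
    have hzero : ∀ σ : Fin n → Fin m, (∀ i', i' ≠ i → σ i' = s i') →
        utility x y k σ i = 0 := by
      intro σ hσ
      unfold utility
      rw [if_neg]
      apply hge σ i (σ i)
      · exact hc2 (i, σ i) hunm
      · have hnav := hnotav (i, σ i)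
        simp only [FCFSExist.avail, not_and, not_lt] at hnav
        exact hnav hunm
      · intro i' hi'
        have hne : i' ≠ i := by
          rintro rfl; exact hi ⟨σ i', hi'⟩
        rw [hσ i' hne, hs]
        exact FCFSExist.strat_eq j0 ha hi'
    have h1 := hzero s (fun _ _ => rfl)
    have h2 := hzero (Function.update s i j) (fun i' hne => Function.update_of_ne hne j s)
    rw [h1, h2]
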